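/- Let P̃ and P be symmetric positive semidefinite n×n matrices with the same image and P positive definite on that image, such that P̃ ≥ P and for each common nonzero eigendirection the eigenvalue ratios σᵢ(P̃)/σᵢ(P) satisfy −ln(σᵢ(P̃)/σᵢ(P)) + σᵢ(P̃)/σᵢ(P) − 1 ≤ 2c for a constant c > 0. Then P̃ ≤ ρ P where ρ > 1 is the unique solution of −ln ρ + ρ − 1 = 2c. -/

import Mathlib

open Matrix

theorem stmt12 (n r : ℕ) (P Ptil : Matrix (Fin n) (Fin n) ℝ)
    (U : Matrix (Fin n) (Fin r) ℝ) (hU : Uᵀ * U = 1)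
    (σ σtil : Fin r → ℝ) (hσ : ∀ i, 0 < σ i) (hσtil : ∀ i, 0 < σtil i)
    (hP : P = U * Matrix.diagonal σ * Uᵀ)
    (hPtil : Ptil = U * Matrix.diagonal σtil * Uᵀ)
    (hge : (Ptil - P).PosSemidef)
    (c : ℝ) (hc : 0 < c)
    (hratio : ∀ i, -Real.log (σtil i / σ i) + σtil i / σ i - 1 ≤ 2 * c)
    (ρ : ℝ) (hρ : 1 < ρ) (hρeq : -Real.log ρ + ρ - 1 = 2 * c) :
    (ρ • P - Ptil).PosSemidef := by
  have hUH : Uᴴ = Uᵀ := Matrix.conjTranspose_eq_transpose_of_trivial U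
  -- Uᵀ (Ptil - P) U = diagonal (σtil - σ)
  have hconj : Uᵀ * (Ptil - P) * U = Matrix.diagonal (σtil - σ) := by
    rw [hP, hPtil, Matrix.mul_sub, Matrix.sub_mul]
    have h1 : Uᵀ * (U * Matrix.diagonal σtil * Uᵀ) * U = Matrix.diagonal σtil := by
      rw [show Uᵀ * (U * Matrix.diagonal σtil * Uᵀ) * U
          = (Uᵀ * U) * Matrix.diagonal σtil * (Uᵀ * U) by
        simp only [Matrix.mul_assoc], hU, Matrix.one_mul, Matrix.mul_one]
    have h2 : Uᵀ * (U * Matrix.diagonal σ * Uᵀ) * U = Matrix.diagonal σ := by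
      rw [show Uᵀ * (U * Matrix.diagonal σ * Uᵀ) * U
          = (Uᵀ * U) * Matrix.diagonal σ * (Uᵀ * U) by
        simp only [Matrix.mul_assoc], hU, Matrix.one_mul, Matrix.mul_one]
    rw [h1, h2, Matrix.diagonal_sub]
    rfl
  have hdiagpsd : (Matrix.diagonal (σtil - σ)).PosSemidef := by
    rw [← hconj]
    simpa using hge.mul_mul_conjTranspose_same Uᵀ
  have hle : ∀ i, σ i ≤ σtil i := by
    intro i
    have := Matrix.posSemidef_diagonal_iff.mp hdiagpsd i
    simpa [sub_nonneg] using this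
  -- key scalar inequality : σtil i ≤ ρ * σ i
  have hkey : ∀ i, σtil i ≤ ρ * σ i := by
    intro i
    set t : ℝ := σtil i / σ i with ht
    have hσi := hσ i
    have ht1 : 1 ≤ t := (one_le_div hσi).mpr (hle i)
    have htρ : t ≤ ρ := by
      by_contra hlt
      push_neg at hlt
      -- h t > h ρ, contradicting hratio
      have hρ0 : 0 < ρ := lt_trans one_pos hρ
      have ht0 : 0 < t := lt_trans hρ0 hlt
      have hne : t / ρ ≠ 1 := by
        have : 1 < t / ρ := (one_lt_div hρ0).mpr hlt
        exact ne_of_gt this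
      have hlog : Real.log (t / ρ) < t / ρ - 1 :=
        Real.log_lt_sub_one_of_pos (div_pos ht0 hρ0) hne
      have hlog2 : Real.log t - Real.log ρ < t / ρ - 1 := by
        rwa [Real.log_div (ne_of_gt ht0) (ne_of_gt hρ0)] at hlog
      have hstep : t / ρ - 1 ≤ t - ρ := by
        rw [div_sub_one (ne_of_gt hρ0), div_le_iff₀ hρ0]
        nlinarith [hρ, hlt]
      have : -Real.log ρ + ρ - 1 < -Real.log t + t - 1 := by linarith
      exact lt_irrefl _ (lt_of_lt_of_le (hρeq ▸ this) (hratio i))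
    calc σtil i = t * σ i := by rw [ht]; exact (div_mul_cancel₀ _ (ne_of_gt hσi)).symm
      _ ≤ ρ * σ i := by nlinarith
  -- now ρ • P - Ptil = U * diagonal (ρ • σ - σtil) * Uᵀ
  have hform : ρ • P - Ptil = U * Matrix.diagonal (ρ • σ - σtil) * Uᵀ := by
    have hd : Matrix.diagonal (ρ • σ - σtil)
        = ρ • Matrix.diagonal σ - Matrix.diagonal σtil := by
      ext i j
      by_cases h : i = j <;> simp [Matrix.diagonal, h]
    rw [hP, hPtil, hd]
    simp [Matrix.mul_sub, Matrix.sub_mul, Matrix.mul_smul, Matrix.smul_mul]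
  rw [hform, ← hUH]
  refine Matrix.PosSemidef.mul_mul_conjTranspose_same ?_ U
  refine Matrix.posSemidef_diagonal_iff.mpr fun i ↦ ?_
  have := hkey i
  simp only [Pi.sub_apply, Pi.smul_apply, smul_eq_mul]
  linarith
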